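/- Let λ > 0, and let X and Y be independent random variables with X Poisson-distributed with mean λ/4 and Y Poisson-distributed with mean 3λ/4. Then E[min(X,Y)] = λ/2 − (1/2)·e^{−λ}·Σ_{k=0}^{∞} k·(3^{−k/2} + 3^{k/2})·I_k((√3/2)·λ), where I_k denotes the modified Bessel function of the first kind, I_k(x) = Σ_{m=0}^{∞} (x/2)^{2m+k} / (m!·(m+k)!). -/

import Mathlib

open MeasureTheory ProbabilityTheory Finset

set_option maxHeartbeats 1000000
open scoped NNReal ENNReal

/-- The modified Bessel function of the first kind of integer order `k`:
`I_k(x) = Σ_{m=0}^∞ (x/2)^(2m+k) / (m!·(m+k)!)`. -/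
noncomputable def besselI (k : ℕ) (x : ℝ) : ℝ :=
  ∑' m : ℕ, (x / 2) ^ (2 * m + k) / ((m.factorial : ℝ) * ((m + k).factorial : ℝ))

noncomputable def pw (x : ℝ) (n : ℕ) : ℝ := x ^ n / n.factorial

lemma pw_nonneg {x : ℝ} (hx : 0 ≤ x) (n : ℕ) : 0 ≤ pw x n := by
  unfold pw; positivity

lemma hasSum_pw (x : ℝ) : HasSum (pw x) (Real.exp x) := by
  have h : Real.exp x = ∑' n : ℕ, x ^ n / n.factorial := by
    rw [Real.exp_eq_exp_ℝ, NormedSpace.exp_eq_tsum_div]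
  rw [show pw x = fun n : ℕ => x ^ n / n.factorial from rfl, h]
  exact (Real.summable_pow_div_factorial x).hasSum

lemma hasSum_mul_pw (x : ℝ) :
    HasSum (fun n : ℕ => pw x n * (n : ℝ)) (x * Real.exp x) := by
  have h := (hasSum_pw x).mul_left x
  have he : ∀ n : ℕ, pw x (n + 1) * ((n + 1 : ℕ) : ℝ) = x * pw x n := by
    intro n
    unfold pw
    rw [Nat.factorial_succ]
    have h1 : (n.factorial : ℝ) ≠ 0 := Nat.cast_ne_zero.mpr n.factorial_ne_zero
    have h2 : ((n : ℝ) + 1) ≠ 0 := by positivity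
    push_cast
    field_simp
    ring
  have h2 : HasSum (fun n : ℕ => pw x (n + 1) * ((n + 1 : ℕ) : ℝ)) (x * Real.exp x) := by
    rw [show (fun n : ℕ => pw x (n + 1) * ((n + 1 : ℕ) : ℝ)) = fun n : ℕ => x * pw x n
      from funext he]
    exact h
  have h3 := (hasSum_nat_add_iff (f := fun n : ℕ => pw x n * (n : ℝ)) 1).mp h2
  simpa [pw] using h3

lemma sqrt3_pow (k : ℕ) : (Real.sqrt 3) ^ k = (3 : ℝ) ^ ((k : ℝ) / 2) := by
  rw [Real.sqrt_eq_rpow, ← Real.rpow_natCast ((3:ℝ) ^ ((1:ℝ)/2)) k,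
    ← Real.rpow_mul (by norm_num : (0:ℝ) ≤ 3)]
  norm_num
  congr 1
  ring

lemma rpow_neg_half_mul (k : ℕ) : (3 : ℝ) ^ (-(k : ℝ) / 2) * (Real.sqrt 3) ^ k = 1 := by
  rw [sqrt3_pow, ← Real.rpow_add (by norm_num : (0:ℝ) < 3)]
  rw [show -(k : ℝ) / 2 + (k : ℝ) / 2 = 0 by ring, Real.rpow_zero]

lemma inner1 (lam : ℝ) (k : ℕ) :
    ∑' m : ℕ, pw (lam / 4) (m + k) * pw (3 * lam / 4) m
      = (3 : ℝ) ^ (-(k : ℝ) / 2) * besselI k (Real.sqrt 3 / 2 * lam) := by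
  rw [besselI, ← tsum_mul_left]
  refine tsum_congr fun m => ?_
  have h1 : Real.sqrt 3 / 2 * lam / 2 = Real.sqrt 3 * (lam / 4) := by ring
  rw [h1, mul_pow, pow_add, pow_mul, Real.sq_sqrt (by norm_num : (0:ℝ) ≤ 3)]
  unfold pw
  have h2 : (3 : ℝ) ^ (-(k : ℝ) / 2) * ((Real.sqrt 3) ^ k : ℝ) = 1 := rpow_neg_half_mul k
  have hm : ((m.factorial : ℝ)) ≠ 0 := Nat.cast_ne_zero.mpr m.factorial_ne_zero
  have hmk : (((m + k).factorial : ℝ)) ≠ 0 := Nat.cast_ne_zero.mpr (m + k).factorial_ne_zero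
  field_simp
  rw [neg_div] at h2
  generalize (4:ℝ) = c at *
  linear_combination (-1 : ℝ) * (3:ℝ) ^ m * (lam / c) ^ (2 * m + k) * h2

lemma rpow_half_mul (k : ℕ) : (3 : ℝ) ^ ((k : ℝ) / 2) * (Real.sqrt 3) ^ k = 3 ^ k := by
  rw [sqrt3_pow, ← Real.rpow_add (by norm_num : (0:ℝ) < 3),
    show (k : ℝ) / 2 + (k : ℝ) / 2 = (k : ℝ) by ring, Real.rpow_natCast]

lemma inner2 (lam : ℝ) (k : ℕ) :
    ∑' m : ℕ, pw (lam / 4) m * pw (3 * lam / 4) (m + k)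
      = (3 : ℝ) ^ ((k : ℝ) / 2) * besselI k (Real.sqrt 3 / 2 * lam) := by
  rw [besselI, ← tsum_mul_left]
  refine tsum_congr fun m => ?_
  have h1 : Real.sqrt 3 / 2 * lam / 2 = Real.sqrt 3 * (lam / 4) := by ring
  rw [h1, mul_pow, pow_add, pow_mul, Real.sq_sqrt (by norm_num : (0:ℝ) ≤ 3)]
  unfold pw
  have h2 : (3 : ℝ) ^ ((k : ℝ) / 2) * ((Real.sqrt 3) ^ k : ℝ) = 3 ^ k := rpow_half_mul k
  have hm : ((m.factorial : ℝ)) ≠ 0 := Nat.cast_ne_zero.mpr m.factorial_ne_zero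
  have hmk : (((m + k).factorial : ℝ)) ≠ 0 := Nat.cast_ne_zero.mpr (m + k).factorial_ne_zero
  field_simp
  generalize (4:ℝ) = c at *
  linear_combination (-1 : ℝ) * (3:ℝ) ^ m * (lam / c) ^ (2 * m + k) * h2

noncomputable def Fabs (lam : ℝ) (p : ℕ × ℕ) : ℝ :=
  pw (lam / 4) p.1 * pw (3 * lam / 4) p.2 * |((p.1 : ℝ)) - (p.2 : ℝ)|

noncomputable def FabsP (lam : ℝ) (p : ℕ × ℕ) : ℝ := if p.2 < p.1 then Fabs lam p else 0
noncomputable def FabsN (lam : ℝ) (p : ℕ × ℕ) : ℝ := if p.1 < p.2 then Fabs lam p else 0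

lemma Fabs_nonneg {lam : ℝ} (h : 0 ≤ lam) (p : ℕ × ℕ) : 0 ≤ Fabs lam p := by
  unfold Fabs
  have h1 := pw_nonneg (by linarith : (0:ℝ) ≤ lam / 4) p.1
  have h2 := pw_nonneg (by linarith : (0:ℝ) ≤ 3 * lam / 4) p.2
  positivity

lemma FabsP_nonneg {lam : ℝ} (h : 0 ≤ lam) (p : ℕ × ℕ) : 0 ≤ FabsP lam p := by
  unfold FabsP; split
  · exact Fabs_nonneg h p
  · exact le_rfl

lemma FabsN_nonneg {lam : ℝ} (h : 0 ≤ lam) (p : ℕ × ℕ) : 0 ≤ FabsN lam p := by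
  unfold FabsN; split
  · exact Fabs_nonneg h p
  · exact le_rfl

lemma Fabs_split (lam : ℝ) (p : ℕ × ℕ) : Fabs lam p = FabsP lam p + FabsN lam p := by
  unfold FabsP FabsN
  rcases lt_trichotomy p.1 p.2 with h | h | h
  · rw [if_neg (by omega), if_pos h, zero_add]
  · rw [if_neg (by omega), if_neg (by omega), add_zero]
    unfold Fabs
    rw [h, sub_self, abs_zero, mul_zero]
  · rw [if_pos h, if_neg (by omega), add_zero]

set_option maxHeartbeats 1000000 in
lemma summable_Fabs {lam : ℝ} (h : 0 ≤ lam) : Summable (Fabs lam) := by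
  have hμ : (0:ℝ) ≤ lam / 4 := by linarith
  have hν : (0:ℝ) ≤ 3 * lam / 4 := by linarith
  have hb : Summable (fun p : ℕ × ℕ => (pw (lam/4) p.1 * (p.1 : ℝ)) * pw (3*lam/4) p.2) :=
    Summable.mul_of_nonneg (hasSum_mul_pw (lam/4)).summable (hasSum_pw (3*lam/4)).summable
      (fun m => mul_nonneg (pw_nonneg hμ m) (Nat.cast_nonneg m)) (fun n => pw_nonneg hν n)
  have hc : Summable (fun p : ℕ × ℕ => pw (lam/4) p.1 * (pw (3*lam/4) p.2 * (p.2 : ℝ))) :=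
    Summable.mul_of_nonneg (hasSum_pw (lam/4)).summable (hasSum_mul_pw (3*lam/4)).summable
      (fun m => pw_nonneg hμ m) (fun n => mul_nonneg (pw_nonneg hν n) (Nat.cast_nonneg n))
  refine Summable.of_nonneg_of_le (Fabs_nonneg h) (fun p => ?_) (hb.add hc)
  unfold Fabs
  have habs : |((p.1 : ℝ)) - (p.2 : ℝ)| ≤ (p.1 : ℝ) + (p.2 : ℝ) := by
    have h0 := abs_sub ((p.1 : ℝ)) ((p.2 : ℝ))
    rwa [abs_of_nonneg (show (0:ℝ) ≤ (p.1 : ℝ) from Nat.cast_nonneg _),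
      abs_of_nonneg (show (0:ℝ) ≤ (p.2 : ℝ) from Nat.cast_nonneg _)] at h0
  have hw : 0 ≤ pw (lam/4) p.1 * pw (3*lam/4) p.2 :=
    mul_nonneg (pw_nonneg hμ p.1) (pw_nonneg hν p.2)
  calc pw (lam/4) p.1 * pw (3*lam/4) p.2 * |((p.1 : ℝ)) - (p.2 : ℝ)|
      ≤ pw (lam/4) p.1 * pw (3*lam/4) p.2 * ((p.1 : ℝ) + (p.2 : ℝ)) := by
        exact mul_le_mul_of_nonneg_left habs hw
    _ = (pw (lam/4) p.1 * (p.1 : ℝ)) * pw (3*lam/4) p.2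
        + pw (lam/4) p.1 * (pw (3*lam/4) p.2 * (p.2 : ℝ)) := by ring

lemma summable_FabsP {lam : ℝ} (h : 0 ≤ lam) : Summable (FabsP lam) :=
  Summable.of_nonneg_of_le (FabsP_nonneg h)
    (fun p => by unfold FabsP; split; exacts [le_rfl, Fabs_nonneg h p]) (summable_Fabs h)

lemma summable_FabsN {lam : ℝ} (h : 0 ≤ lam) : Summable (FabsN lam) :=
  Summable.of_nonneg_of_le (FabsN_nonneg h)
    (fun p => by unfold FabsN; split; exacts [le_rfl, Fabs_nonneg h p]) (summable_Fabs h)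

def g1 (q : ℕ × ℕ) : ℕ × ℕ := (q.2 + q.1 + 1, q.2)
def g2 (q : ℕ × ℕ) : ℕ × ℕ := (q.2, q.2 + q.1 + 1)

lemma g1_inj : Function.Injective g1 := by
  intro a b hab
  simp only [g1, Prod.mk.injEq] at hab
  exact Prod.ext (by omega) (by omega)

lemma g2_inj : Function.Injective g2 := by
  intro a b hab
  simp only [g2, Prod.mk.injEq] at hab
  exact Prod.ext (by omega) (by omega)

lemma tsum_FabsP (lam : ℝ) (hlam : 0 ≤ lam) :
    (∑' p : ℕ × ℕ, FabsP lam p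
      = ∑' k : ℕ, (k : ℝ) * ((3:ℝ) ^ (-(k:ℝ)/2) * besselI k (Real.sqrt 3 / 2 * lam)))
    ∧ Summable (fun k : ℕ =>
        (k : ℝ) * ((3:ℝ) ^ (-(k:ℝ)/2) * besselI k (Real.sqrt 3 / 2 * lam))) := by
  set u : ℕ → ℝ :=
    fun k => (k : ℝ) * ((3:ℝ) ^ (-(k:ℝ)/2) * besselI k (Real.sqrt 3 / 2 * lam)) with hu_def
  have hsupp : Function.support (FabsP lam) ⊆ Set.range g1 := by
    intro p hp
    have hlt : p.2 < p.1 := by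
      by_contra hc
      exact hp (by unfold FabsP; rw [if_neg hc])
    exact ⟨(p.1 - p.2 - 1, p.2), Prod.ext (by simp only [g1]; omega) rfl⟩
  have hterm : ∀ q : ℕ × ℕ, FabsP lam (g1 q)
      = ((q.1:ℝ)+1) * (pw (lam/4) (q.2 + (q.1+1)) * pw (3*lam/4) q.2) := by
    intro q
    simp only [FabsP, g1, Fabs]
    refine (if_pos (by omega : q.2 < q.2 + q.1 + 1)).trans ?_
    have habs : |(((q.2 + q.1 + 1 : ℕ)):ℝ) - (q.2:ℝ)| = (q.1:ℝ) + 1 := by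
      push_cast
      rw [show (q.2:ℝ) + (q.1:ℝ) + 1 - (q.2:ℝ) = (q.1:ℝ) + 1 by ring,
        abs_of_nonneg (by positivity)]
    rw [habs, show q.2 + q.1 + 1 = q.2 + (q.1 + 1) by omega]
    ring
  have hcomp : Summable (fun q => FabsP lam (g1 q)) :=
    (g1_inj.summable_iff (fun x hx => by
      by_contra h0
      exact hx (hsupp h0))).mpr (summable_FabsP hlam)
  have hval : ∀ k : ℕ, (∑' m : ℕ, FabsP lam (g1 (k, m))) = u (k+1) := by
    intro k
    calc ∑' m : ℕ, FabsP lam (g1 (k, m))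
        = ∑' m : ℕ, ((k:ℝ)+1) * (pw (lam/4) (m + (k+1)) * pw (3*lam/4) m) :=
          tsum_congr fun m => hterm (k, m)
      _ = ((k:ℝ)+1) * ∑' m : ℕ, (pw (lam/4) (m + (k+1)) * pw (3*lam/4) m) := tsum_mul_left
      _ = ((k:ℝ)+1) * ((3:ℝ) ^ (-((k+1:ℕ):ℝ)/2) * besselI (k+1) (Real.sqrt 3 / 2 * lam)) := by
          rw [inner1 lam (k+1)]
      _ = u (k+1) := by rw [hu_def]; push_cast; ring_nf
  have houter : Summable (fun k : ℕ => ∑' m : ℕ, FabsP lam (g1 (k, m))) :=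
    ((summable_prod_of_nonneg (fun q => FabsP_nonneg hlam (g1 q))).mp hcomp).2
  have hshift : Summable (fun k : ℕ => u (k+1)) := houter.congr hval
  have hu_summ : Summable u := (summable_nat_add_iff 1).mp hshift
  refine ⟨?_, hu_summ⟩
  have key : ∑' k, u k = ∑' p, FabsP lam p := by
    rw [Summable.tsum_eq_zero_add hu_summ]
    have hu0 : u 0 = 0 := by rw [hu_def]; simp
    rw [hu0, zero_add]
    calc ∑' k : ℕ, u (k+1)
        = ∑' k : ℕ, ∑' m : ℕ, FabsP lam (g1 (k, m)) := (tsum_congr hval).symm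
      _ = ∑' q : ℕ × ℕ, FabsP lam (g1 q) :=
          (Summable.tsum_prod' hcomp ((summable_prod_of_nonneg
            (fun q => FabsP_nonneg hlam (g1 q))).mp hcomp).1).symm
      _ = ∑' p, FabsP lam p := g1_inj.tsum_eq hsupp
  exact key.symm

lemma tsum_FabsN (lam : ℝ) (hlam : 0 ≤ lam) :
    (∑' p : ℕ × ℕ, FabsN lam p
      = ∑' k : ℕ, (k : ℝ) * ((3:ℝ) ^ ((k:ℝ)/2) * besselI k (Real.sqrt 3 / 2 * lam)))
    ∧ Summable (fun k : ℕ =>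
        (k : ℝ) * ((3:ℝ) ^ ((k:ℝ)/2) * besselI k (Real.sqrt 3 / 2 * lam))) := by
  set v : ℕ → ℝ :=
    fun k => (k : ℝ) * ((3:ℝ) ^ ((k:ℝ)/2) * besselI k (Real.sqrt 3 / 2 * lam)) with hv_def
  have hsupp : Function.support (FabsN lam) ⊆ Set.range g2 := by
    intro p hp
    have hlt : p.1 < p.2 := by
      by_contra hc
      exact hp (by unfold FabsN; rw [if_neg hc])
    exact ⟨(p.2 - p.1 - 1, p.1), Prod.ext rfl (by simp only [g2]; omega)⟩
  have hterm : ∀ q : ℕ × ℕ, FabsN lam (g2 q)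
      = ((q.1:ℝ)+1) * (pw (lam/4) q.2 * pw (3*lam/4) (q.2 + (q.1+1))) := by
    intro q
    simp only [FabsN, g2, Fabs]
    refine (if_pos (by omega : q.2 < q.2 + q.1 + 1)).trans ?_
    have habs : |((q.2:ℝ)) - (((q.2 + q.1 + 1 : ℕ)):ℝ)| = (q.1:ℝ) + 1 := by
      push_cast
      rw [show (q.2:ℝ) - ((q.2:ℝ) + (q.1:ℝ) + 1) = -((q.1:ℝ) + 1) by ring, abs_neg,
        abs_of_nonneg (by positivity)]
    rw [habs, show q.2 + q.1 + 1 = q.2 + (q.1 + 1) by omega]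
    ring
  have hcomp : Summable (fun q => FabsN lam (g2 q)) :=
    (g2_inj.summable_iff (fun x hx => by
      by_contra h0
      exact hx (hsupp h0))).mpr (summable_FabsN hlam)
  have hval : ∀ k : ℕ, (∑' m : ℕ, FabsN lam (g2 (k, m))) = v (k+1) := by
    intro k
    calc ∑' m : ℕ, FabsN lam (g2 (k, m))
        = ∑' m : ℕ, ((k:ℝ)+1) * (pw (lam/4) m * pw (3*lam/4) (m + (k+1))) :=
          tsum_congr fun m => hterm (k, m)
      _ = ((k:ℝ)+1) * ∑' m : ℕ, (pw (lam/4) m * pw (3*lam/4) (m + (k+1))) := tsum_mul_left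
      _ = ((k:ℝ)+1) * ((3:ℝ) ^ (((k+1:ℕ):ℝ)/2) * besselI (k+1) (Real.sqrt 3 / 2 * lam)) := by
          rw [inner2 lam (k+1)]
      _ = v (k+1) := by rw [hv_def]; push_cast; ring_nf
  have houter : Summable (fun k : ℕ => ∑' m : ℕ, FabsN lam (g2 (k, m))) :=
    ((summable_prod_of_nonneg (fun q => FabsN_nonneg hlam (g2 q))).mp hcomp).2
  have hshift : Summable (fun k : ℕ => v (k+1)) := houter.congr hval
  have hv_summ : Summable v := (summable_nat_add_iff 1).mp hshift
  refine ⟨?_, hv_summ⟩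
  have key : ∑' k, v k = ∑' p, FabsN lam p := by
    rw [Summable.tsum_eq_zero_add hv_summ]
    have hv0 : v 0 = 0 := by rw [hv_def]; simp
    rw [hv0, zero_add]
    calc ∑' k : ℕ, v (k+1)
        = ∑' k : ℕ, ∑' m : ℕ, FabsN lam (g2 (k, m)) := (tsum_congr hval).symm
      _ = ∑' q : ℕ × ℕ, FabsN lam (g2 q) :=
          (Summable.tsum_prod' hcomp ((summable_prod_of_nonneg
            (fun q => FabsN_nonneg hlam (g2 q))).mp hcomp).1).symm
      _ = ∑' p, FabsN lam p := g2_inj.tsum_eq hsupp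
  exact key.symm

lemma abs_sum_eq (lam : ℝ) (hlam : 0 ≤ lam) :
    ∑' p : ℕ × ℕ, Fabs lam p
      = ∑' k : ℕ, (k : ℝ) * ((3:ℝ) ^ (-(k:ℝ)/2) + (3:ℝ) ^ ((k:ℝ)/2)) *
          besselI k (Real.sqrt 3 / 2 * lam) := by
  obtain ⟨hP, hPs⟩ := tsum_FabsP lam hlam
  obtain ⟨hN, hNs⟩ := tsum_FabsN lam hlam
  calc ∑' p : ℕ × ℕ, Fabs lam p
      = ∑' p : ℕ × ℕ, (FabsP lam p + FabsN lam p) := tsum_congr (Fabs_split lam)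
    _ = ∑' p : ℕ × ℕ, FabsP lam p + ∑' p : ℕ × ℕ, FabsN lam p :=
        Summable.tsum_add (summable_FabsP hlam) (summable_FabsN hlam)
    _ = (∑' k : ℕ, (k : ℝ) * ((3:ℝ) ^ (-(k:ℝ)/2) * besselI k (Real.sqrt 3 / 2 * lam)))
        + ∑' k : ℕ, (k : ℝ) * ((3:ℝ) ^ ((k:ℝ)/2) * besselI k (Real.sqrt 3 / 2 * lam)) := by
        rw [hP, hN]
    _ = ∑' k : ℕ, ((k : ℝ) * ((3:ℝ) ^ (-(k:ℝ)/2) * besselI k (Real.sqrt 3 / 2 * lam))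
        + (k : ℝ) * ((3:ℝ) ^ ((k:ℝ)/2) * besselI k (Real.sqrt 3 / 2 * lam))) :=
        (Summable.tsum_add hPs hNs).symm
    _ = ∑' k : ℕ, (k : ℝ) * ((3:ℝ) ^ (-(k:ℝ)/2) + (3:ℝ) ^ ((k:ℝ)/2)) *
          besselI k (Real.sqrt 3 / 2 * lam) := tsum_congr fun k => by ring

lemma summable_norm_of_nonneg {ι : Type*} {f : ι → ℝ} (hs : Summable f) (h0 : ∀ i, 0 ≤ f i) :
    Summable fun i => ‖f i‖ := by
  rw [show (fun i => ‖f i‖) = f from funext fun i => Real.norm_of_nonneg (h0 i)]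
  exact hs

lemma min_cast (m n : ℕ) :
    ((min m n : ℕ) : ℝ) = ((m:ℝ) + (n:ℝ) - |(m:ℝ) - (n:ℝ)|) / 2 := by
  rcases le_total m n with h | h
  · have h' : (m:ℝ) ≤ n := by exact_mod_cast h
    rw [min_eq_left h, abs_of_nonpos (by linarith)]
    ring
  · have h' : (n:ℝ) ≤ m := by exact_mod_cast h
    rw [min_eq_right h, abs_of_nonneg (by linarith)]
    ring

lemma series_min (lam : ℝ) (hlam : 0 ≤ lam) :
    ∑' p : ℕ × ℕ, pw (lam/4) p.1 * pw (3*lam/4) p.2 * ((min p.1 p.2 : ℕ) : ℝ)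
      = lam / 2 * Real.exp lam - (1/2) *
        ∑' k : ℕ, (k : ℝ) * ((3:ℝ) ^ (-(k:ℝ)/2) + (3:ℝ) ^ ((k:ℝ)/2)) *
          besselI k (Real.sqrt 3 / 2 * lam) := by
  have hμ : (0:ℝ) ≤ lam / 4 := by linarith
  have hν : (0:ℝ) ≤ 3 * lam / 4 := by linarith
  have hA : Summable (fun p : ℕ × ℕ => pw (lam/4) p.1 * pw (3*lam/4) p.2 * (p.1 : ℝ)) := by
    have hb : Summable (fun p : ℕ × ℕ => (pw (lam/4) p.1 * (p.1 : ℝ)) * pw (3*lam/4) p.2) :=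
      Summable.mul_of_nonneg (hasSum_mul_pw (lam/4)).summable (hasSum_pw (3*lam/4)).summable
        (fun m => mul_nonneg (pw_nonneg hμ m) (Nat.cast_nonneg m)) (fun n => pw_nonneg hν n)
    exact hb.congr fun p => by ring
  have hB : Summable (fun p : ℕ × ℕ => pw (lam/4) p.1 * pw (3*lam/4) p.2 * (p.2 : ℝ)) := by
    have hc : Summable (fun p : ℕ × ℕ => pw (lam/4) p.1 * (pw (3*lam/4) p.2 * (p.2 : ℝ))) :=
      Summable.mul_of_nonneg (hasSum_pw (lam/4)).summable (hasSum_mul_pw (3*lam/4)).summable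
        (fun m => pw_nonneg hμ m) (fun n => mul_nonneg (pw_nonneg hν n) (Nat.cast_nonneg n))
    exact hc.congr fun p => by ring
  have hF : Summable (Fabs lam) := summable_Fabs hlam
  have hvalA : ∑' p : ℕ × ℕ, pw (lam/4) p.1 * pw (3*lam/4) p.2 * (p.1 : ℝ)
      = (lam/4) * Real.exp (lam/4) * Real.exp (3*lam/4) := by
    have h := tsum_mul_tsum_of_summable_norm
      (summable_norm_of_nonneg (hasSum_mul_pw (lam/4)).summable
        (fun m => mul_nonneg (pw_nonneg hμ m) (Nat.cast_nonneg m)))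
      (summable_norm_of_nonneg (hasSum_pw (3*lam/4)).summable (fun n => pw_nonneg hν n))
    rw [(hasSum_mul_pw (lam/4)).tsum_eq, (hasSum_pw (3*lam/4)).tsum_eq] at h
    calc ∑' p : ℕ × ℕ, pw (lam/4) p.1 * pw (3*lam/4) p.2 * (p.1 : ℝ)
        = ∑' z : ℕ × ℕ, (pw (lam/4) z.1 * (z.1 : ℝ)) * pw (3*lam/4) z.2 :=
          tsum_congr fun p => by ring
      _ = lam/4 * Real.exp (lam/4) * Real.exp (3*lam/4) := h.symm
  have hvalB : ∑' p : ℕ × ℕ, pw (lam/4) p.1 * pw (3*lam/4) p.2 * (p.2 : ℝ)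
      = Real.exp (lam/4) * (3*lam/4 * Real.exp (3*lam/4)) := by
    have h := tsum_mul_tsum_of_summable_norm
      (summable_norm_of_nonneg (hasSum_pw (lam/4)).summable (fun m => pw_nonneg hμ m))
      (summable_norm_of_nonneg (hasSum_mul_pw (3*lam/4)).summable
        (fun n => mul_nonneg (pw_nonneg hν n) (Nat.cast_nonneg n)))
    rw [(hasSum_pw (lam/4)).tsum_eq, (hasSum_mul_pw (3*lam/4)).tsum_eq] at h
    calc ∑' p : ℕ × ℕ, pw (lam/4) p.1 * pw (3*lam/4) p.2 * (p.2 : ℝ)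
        = ∑' z : ℕ × ℕ, pw (lam/4) z.1 * (pw (3*lam/4) z.2 * (z.2 : ℝ)) :=
          tsum_congr fun p => by ring
      _ = Real.exp (lam/4) * (3*lam/4 * Real.exp (3*lam/4)) := h.symm
  have hE : Real.exp (lam/4) * Real.exp (3*lam/4) = Real.exp lam := by
    rw [← Real.exp_add]
    ring_nf
  calc ∑' p : ℕ × ℕ, pw (lam/4) p.1 * pw (3*lam/4) p.2 * ((min p.1 p.2 : ℕ) : ℝ)
      = ∑' p : ℕ × ℕ, ((pw (lam/4) p.1 * pw (3*lam/4) p.2 * (p.1 : ℝ)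
          + pw (lam/4) p.1 * pw (3*lam/4) p.2 * (p.2 : ℝ)) - Fabs lam p) * (1/2) :=
        tsum_congr fun p => by rw [min_cast]; unfold Fabs; ring
    _ = (∑' p : ℕ × ℕ, ((pw (lam/4) p.1 * pw (3*lam/4) p.2 * (p.1 : ℝ)
          + pw (lam/4) p.1 * pw (3*lam/4) p.2 * (p.2 : ℝ)) - Fabs lam p)) * (1/2) :=
        tsum_mul_right
    _ = ((∑' p : ℕ × ℕ, (pw (lam/4) p.1 * pw (3*lam/4) p.2 * (p.1 : ℝ)
          + pw (lam/4) p.1 * pw (3*lam/4) p.2 * (p.2 : ℝ)))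
          - ∑' p : ℕ × ℕ, Fabs lam p) * (1/2) := by rw [Summable.tsum_sub (hA.add hB) hF]
    _ = ((∑' p : ℕ × ℕ, pw (lam/4) p.1 * pw (3*lam/4) p.2 * (p.1 : ℝ))
          + (∑' p : ℕ × ℕ, pw (lam/4) p.1 * pw (3*lam/4) p.2 * (p.2 : ℝ))
          - ∑' p : ℕ × ℕ, Fabs lam p) * (1/2) := by rw [Summable.tsum_add hA hB]
    _ = lam / 2 * Real.exp lam - (1/2) *
        ∑' k : ℕ, (k : ℝ) * ((3:ℝ) ^ (-(k:ℝ)/2) + (3:ℝ) ^ ((k:ℝ)/2)) *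
          besselI k (Real.sqrt 3 / 2 * lam) := by
        rw [hvalA, hvalB, abs_sum_eq lam hlam]
        linear_combination (lam/2) * hE

lemma poisson_singleton (r : ℝ≥0) (n : ℕ) :
    (poissonMeasure r) {n} = ENNReal.ofReal (poissonPMFReal r n) := by
  rw [poissonMeasure_singleton]
  rfl

lemma integrable_id_poisson (r : ℝ≥0) :
    Integrable (fun n : ℕ => (n : ℝ)) (poissonMeasure r) := by
  have hsum : Summable (fun n : ℕ => (n : ℝ) * poissonPMFReal r n) := by
    have h := ((hasSum_mul_pw (r : ℝ)).summable).mul_left (Real.exp (-(r:ℝ)))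
    refine h.congr fun n => ?_
    unfold pw poissonPMFReal
    ring
  have h0 : ∀ n : ℕ, 0 ≤ (n : ℝ) * poissonPMFReal r n :=
    fun n => mul_nonneg (Nat.cast_nonneg n) poissonPMFReal_nonneg
  refine ⟨measurable_from_top.aestronglyMeasurable, ?_⟩
  have h : (∫⁻ n, (‖(n : ℝ)‖₊ : ℝ≥0∞) ∂(poissonMeasure r)) < ⊤ := by
    rw [lintegral_countable']
    have heq : ∀ n : ℕ, (‖(n : ℝ)‖₊ : ℝ≥0∞) * (poissonMeasure r) {n}
        = ENNReal.ofReal ((n : ℝ) * poissonPMFReal r n) := by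
      intro n
      rw [poisson_singleton, ← enorm_eq_nnnorm, Real.enorm_eq_ofReal (Nat.cast_nonneg n),
        ← ENNReal.ofReal_mul (Nat.cast_nonneg n)]
    rw [tsum_congr heq, ← ENNReal.ofReal_tsum_of_nonneg h0 hsum]
    exact ENNReal.ofReal_lt_top
  exact h

theorem expected_min_of_poissons
    {Ω : Type*} [MeasurableSpace Ω] (P : Measure Ω) [IsProbabilityMeasure P]
    (lam : ℝ) (hlam : 0 < lam)
    (X Y : Ω → ℕ) (hX : Measurable X) (hY : Measurable Y)
    (hindep : IndepFun X Y P)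
    (hXlaw : P.map X = poissonMeasure (Real.toNNReal (lam / 4)))
    (hYlaw : P.map Y = poissonMeasure (Real.toNNReal (3 * lam / 4))) :
    ∫ ω, (min (X ω) (Y ω) : ℝ) ∂P =
      lam / 2 - (1 / 2) * Real.exp (-lam) *
        ∑' k : ℕ, (k : ℝ) * ((3 : ℝ) ^ (-(k : ℝ) / 2) + (3 : ℝ) ^ ((k : ℝ) / 2)) *
          besselI k (Real.sqrt 3 / 2 * lam) := by
  have h4 : (0:ℝ) ≤ lam / 4 := by linarith
  have h34 : (0:ℝ) ≤ 3 * lam / 4 := by linarith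
  set μn := Real.toNNReal (lam / 4) with hμn
  set νn := Real.toNNReal (3 * lam / 4) with hνn
  have hμc : ((μn : ℝ≥0) : ℝ) = lam / 4 := Real.coe_toNNReal _ h4
  have hνc : ((νn : ℝ≥0) : ℝ) = 3 * lam / 4 := Real.coe_toNNReal _ h34
  have hjoint : P.map (fun ω => (X ω, Y ω))
      = (poissonMeasure μn).prod (poissonMeasure νn) := by
    rw [← hXlaw, ← hYlaw]
    exact (indepFun_iff_map_prod_eq_prod_map_map hX.aemeasurable hY.aemeasurable).mp hindep
  have hmeasmin : Measurable (fun p : ℕ × ℕ => min (p.1 : ℝ) (p.2 : ℝ)) :=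
    measurable_from_prod_countable_left fun _ => measurable_from_top
  have hintegral_map : ∫ ω, (min (X ω) (Y ω) : ℝ) ∂P
      = ∫ p : ℕ × ℕ, min (p.1 : ℝ) (p.2 : ℝ)
          ∂((poissonMeasure μn).prod (poissonMeasure νn)) := by
    rw [← hjoint, integral_map (hX.prodMk hY).aemeasurable hmeasmin.aestronglyMeasurable]
  have hfst : Integrable (fun p : ℕ × ℕ => (p.1 : ℝ))
      ((poissonMeasure μn).prod (poissonMeasure νn)) := by
    have h1 : Integrable (fun n : ℕ => (n : ℝ)) (poissonMeasure μn) := integrable_id_poisson μn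
    have hmap : Measure.map Prod.fst ((poissonMeasure μn).prod (poissonMeasure νn))
        = poissonMeasure μn := by
      rw [Measure.map_fst_prod]
      simp
    rw [← hmap] at h1
    exact (integrable_map_measure measurable_from_top.aestronglyMeasurable
      measurable_fst.aemeasurable).mp h1
  have hmin_int : Integrable (fun p : ℕ × ℕ => min (p.1 : ℝ) (p.2 : ℝ))
      ((poissonMeasure μn).prod (poissonMeasure νn)) := by
    refine hfst.mono hmeasmin.aestronglyMeasurable (ae_of_all _ fun p => ?_)
    rw [Real.norm_of_nonneg (le_min (Nat.cast_nonneg _) (Nat.cast_nonneg _)),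
      Real.norm_of_nonneg (Nat.cast_nonneg _)]
    exact min_le_left _ _
  rw [hintegral_map, integral_countable' hmin_int]
  have hsum : ∑' p : ℕ × ℕ,
      ((((poissonMeasure μn).prod (poissonMeasure νn)) {p}).toReal) • min (p.1 : ℝ) (p.2 : ℝ)
      = Real.exp (-lam) *
        ∑' p : ℕ × ℕ, pw (lam/4) p.1 * pw (3*lam/4) p.2 * ((min p.1 p.2 : ℕ) : ℝ) := by
    rw [← tsum_mul_left]
    refine tsum_congr fun p => ?_
    have hsingle : (((poissonMeasure μn).prod (poissonMeasure νn)) {p}).toReal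
        = poissonPMFReal μn p.1 * poissonPMFReal νn p.2 := by
      have hp : ({p} : Set (ℕ × ℕ)) = {p.1} ×ˢ {p.2} := by
        rw [Set.singleton_prod_singleton]
      rw [hp, Measure.prod_prod, poisson_singleton, poisson_singleton,
        ← ENNReal.ofReal_mul poissonPMFReal_nonneg, ENNReal.toReal_ofReal
          (mul_nonneg poissonPMFReal_nonneg poissonPMFReal_nonneg)]
    rw [hsingle, smul_eq_mul, ← Nat.cast_min]
    unfold poissonPMFReal pw
    rw [hμc, hνc]
    have hE : Real.exp (-(lam/4)) * Real.exp (-(3*lam/4)) = Real.exp (-lam) := by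
      rw [← Real.exp_add]
      ring_nf
    linear_combination (((lam/4) ^ p.1 / (p.1.factorial : ℝ)) *
      ((3*lam/4) ^ p.2 / (p.2.factorial : ℝ)) * ((min p.1 p.2 : ℕ) : ℝ)) * hE
  simp only [measureReal_def]
  rw [hsum, series_min lam hlam.le]
  have hE2 : Real.exp (-lam) * Real.exp lam = 1 := by
    rw [← Real.exp_add]
    simp
  linear_combination (lam/2) * hE2
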